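/- Let 0 < R ≤ 1/6, let N ≥ 1 be a natural number, and 0 ≤ i ≤ N-1, and let γ ∈ (0,1]. Then ln^γ( ln^{1/2}( 1/(2(1 - i/(3N))R) ) ) ≤ ln^γ( ln^{1/2}(1/(2R)) ) + (i/N)^{γ/2}, provided ln(1/(2R)) ≥ 1. -/

import Mathlib

open Real

lemma real_add_rpow_le (a b p : ℝ) (ha : 0 ≤ a) (hb : 0 ≤ b) (hp : 0 ≤ p) (hp1 : p ≤ 1) :
    (a + b) ^ p ≤ a ^ p + b ^ p := by
  lift a to NNReal using ha
  lift b to NNReal using hb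
  have := NNReal.rpow_add_le_add_rpow a b hp hp1
  have h2 : ((a + b : NNReal) : ℝ) ^ p ≤ (((a : NNReal) ^ p + (b : NNReal) ^ p : NNReal) : ℝ) := by
    rw [← NNReal.coe_rpow]
    exact_mod_cast this
  simpa [NNReal.coe_rpow] using h2

theorem iterated_log_shift_bound (R : ℝ) (hR0 : 0 < R) (hR : R ≤ 1 / 6)
    (N : ℕ) (hN : 1 ≤ N) (i : ℕ) (hi : i ≤ N - 1)
    (γ : ℝ) (hγ0 : 0 < γ) (hγ1 : γ ≤ 1)
    (hlog : 1 ≤ Real.log (1 / (2 * R))) :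
    (Real.log (Real.sqrt (Real.log (1 / (2 * (1 - (i : ℝ) / (3 * (N : ℝ))) * R))))) ^ γ
      ≤ (Real.log (Real.sqrt (Real.log (1 / (2 * R))))) ^ γ + ((i : ℝ) / (N : ℝ)) ^ (γ / 2) := by
  have hN0 : (0:ℝ) < (N:ℝ) := by exact_mod_cast hN
  set x : ℝ := (i : ℝ) / (3 * (N : ℝ)) with hxdef
  have hx0 : 0 ≤ x := by positivity
  have hiN : (i : ℝ) ≤ (N : ℝ) := by
    exact_mod_cast le_trans hi (Nat.sub_le N 1)
  have hx13 : x ≤ 1 / 3 := by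
    rw [hxdef, div_le_div_iff₀ (by positivity) (by norm_num)]
    linarith
  have hx12 : x ≤ 1 / 2 := by linarith
  set L : ℝ := Real.log (1 / (2 * R)) with hLdef
  -- 1 - x > 0
  have h1x : (0:ℝ) < 1 - x := by linarith
  -- log(1/(1-x)) ≤ 2x
  have hA : 1 / (2 * (1 - x) * R) = (1 / (2 * R)) * (1 / (1 - x)) := by
    field_simp
  have hlog1x : Real.log (1 / (1 - x)) ≤ 2 * x := by
    rw [Real.log_div one_ne_zero (ne_of_gt h1x), Real.log_one, zero_sub,
      neg_le, ← Real.log_exp (-(2*x))]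
    apply Real.log_le_log (Real.exp_pos _)
    -- exp(-(2x)) ≤ 1 - x
    have h1 : Real.exp (-(2*x)) ≤ 1 / (1 + 2*x) := by
      rw [le_div_iff₀ (by linarith), ← Real.exp_log (show (0:ℝ) < 1 + 2*x by linarith)]
      rw [← Real.exp_add]
      have : Real.log (1 + 2*x) ≤ 2*x := by
        have := Real.log_le_sub_one_of_pos (show (0:ℝ) < 1 + 2*x by linarith)
        linarith
      calc Real.exp (-(2*x) + Real.log (1+2*x)) ≤ Real.exp 0 := by
            apply Real.exp_le_exp.mpr; linarith
        _ = 1 := Real.exp_zero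
    have h2 : 1 / (1 + 2*x) ≤ 1 - x := by
      rw [div_le_iff₀ (by linarith)]
      nlinarith
    linarith
  set L' : ℝ := Real.log (1 / (2 * (1 - x) * R)) with hL'def
  have hL'eq : L' = L + Real.log (1 / (1 - x)) := by
    rw [hL'def, hA, Real.log_mul (by positivity) (by positivity)]
  have hlog1x0 : 0 ≤ Real.log (1 / (1 - x)) := by
    apply Real.log_nonneg
    rw [le_div_iff₀ h1x]; linarith
  have hL'ge : 1 ≤ L' := by rw [hL'eq]; linarith
  have hL'le : L' ≤ L + 2 * x := by rw [hL'eq]; linarith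
  -- log √ L' = log L' / 2
  have hs1 : Real.log (Real.sqrt L') = Real.log L' / 2 := Real.log_sqrt (by linarith)
  have hs2 : Real.log (Real.sqrt L) = Real.log L / 2 := Real.log_sqrt (by linarith)
  -- log L' ≤ log L + 2x
  have hlogL' : Real.log L' ≤ Real.log L + 2 * x := by
    have h1 : Real.log L' ≤ Real.log (L + 2*x) := Real.log_le_log (by linarith) hL'le
    have h2 : Real.log (L + 2*x) - Real.log L = Real.log ((L + 2*x)/L) := by
      rw [Real.log_div (by linarith) (by linarith)]
    have h3 : Real.log ((L + 2*x)/L) ≤ (L + 2*x)/L - 1 :=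
      Real.log_le_sub_one_of_pos (by positivity)
    have h4 : (L + 2*x)/L - 1 = 2*x/L := by field_simp; ring
    have h5 : 2*x/L ≤ 2*x := by
      apply div_le_self (by linarith) (by linarith)
    linarith
  have hlogL0 : 0 ≤ Real.log L := Real.log_nonneg hlog
  have hlogL'0 : 0 ≤ Real.log L' := Real.log_nonneg hL'ge
  -- main chain
  have step1 : (Real.log L' / 2) ^ γ ≤ (Real.log L / 2 + x) ^ γ := by
    apply Real.rpow_le_rpow (by linarith) (by linarith) (le_of_lt hγ0)
  have step2 : (Real.log L / 2 + x) ^ γ ≤ (Real.log L / 2) ^ γ + x ^ γ :=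
    real_add_rpow_le _ _ _ (by linarith) hx0 (le_of_lt hγ0) hγ1
  have step3 : x ^ γ ≤ ((i : ℝ) / (N : ℝ)) ^ (γ / 2) := by
    have hxx : x ^ γ = (x ^ 2) ^ (γ / 2) := by
      rw [← Real.rpow_natCast x 2, ← Real.rpow_mul hx0,
        show ((2:ℕ):ℝ) * (γ/2) = γ by push_cast; ring]
    rw [hxx]
    apply Real.rpow_le_rpow (by positivity) _ (by linarith)
    have h3x : (i : ℝ) / (N : ℝ) = 3 * x := by
      rw [hxdef]; field_simp
    rw [h3x]
    calc x ^ 2 = x * x := sq x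
      _ ≤ 3 * x := mul_le_mul_of_nonneg_right (by linarith) hx0
  rw [hs1, hs2]
  calc (Real.log L' / 2) ^ γ ≤ (Real.log L / 2 + x) ^ γ := step1
    _ ≤ (Real.log L / 2) ^ γ + x ^ γ := step2
    _ ≤ (Real.log L / 2) ^ γ + ((i : ℝ) / (N : ℝ)) ^ (γ / 2) := by linarith
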